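/- arXiv:1507.05797 — 2 statements merged into one kernel-verified Lean document; each statement's English description precedes it below -/
import Mathlib

section
/- Let θ₁ be a non-constant inner function on the upper half-plane, analytic in a neighbourhood of a point a ∈ ℝ with θ₁(a) = 1. Then the function Λ(ξ) = (θ₁(ξ) − 1)/(ξ − a) belongs to the model space K_{θ₁} = H_p^+ ∩ θ₁H_p^- for every p ∈ (1, ∞). -/
open MeasureTheory Complex Filter Set
open scoped Pointwise ENNReal

noncomputable section

/-- The open upper half-plane. -/
def UHP : Set ℂ := {z | 0 < z.im}
/-- The open lower half-plane. -/
def LHP : Set ℂ := {z | z.im < 0}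

/-- Nontangential-type boundary limit from above at a real point `x`. -/
def bdryLimUp (F : ℂ → ℂ) (x : ℝ) (c : ℂ) : Prop :=
  Filter.Tendsto (fun y : ℝ => F (x + y * Complex.I)) (nhdsWithin 0 (Set.Ioi 0)) (nhds c)

/-- Boundary limit from below at a real point `x`. -/
def bdryLimLow (F : ℂ → ℂ) (x : ℝ) (c : ℂ) : Prop :=
  Filter.Tendsto (fun y : ℝ => F (x + y * Complex.I)) (nhdsWithin 0 (Set.Iio 0)) (nhds c)

/-- The Hardy space `H_p^+` of the upper half-plane, viewed as a set of boundary
functions on `ℝ`. -/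
def Hplus (p : ℝ) : Set (ℝ → ℂ) :=
  {f | MemLp f (ENNReal.ofReal p) volume ∧
    ∃ F : ℂ → ℂ, DifferentiableOn ℂ F UHP ∧
      (∃ C : ℝ, ∀ y : ℝ, 0 < y → (∫ x : ℝ, ‖F (x + y * Complex.I)‖ ^ p) ≤ C) ∧
      ∀ᵐ x : ℝ, bdryLimUp F x (f x)}

/-- The Hardy space `H_p^-` of the lower half-plane, as boundary functions on `ℝ`. -/
def Hminus (p : ℝ) : Set (ℝ → ℂ) :=
  {f | MemLp f (ENNReal.ofReal p) volume ∧
    ∃ F : ℂ → ℂ, DifferentiableOn ℂ F LHP ∧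
      (∃ C : ℝ, ∀ y : ℝ, y < 0 → (∫ x : ℝ, ‖F (x + y * Complex.I)‖ ^ p) ≤ C) ∧
      ∀ᵐ x : ℝ, bdryLimLow F x (f x)}

/-- `H_∞^+`: boundary functions of bounded analytic functions on `ℂ⁺`. -/
def HinfPlus : Set (ℝ → ℂ) :=
  {f | ∃ F : ℂ → ℂ, DifferentiableOn ℂ F UHP ∧ (∃ C : ℝ, ∀ z ∈ UHP, ‖F z‖ ≤ C) ∧
      ∀ᵐ x : ℝ, bdryLimUp F x (f x)}

/-- `H_∞^-`: boundary functions of bounded analytic functions on `ℂ⁻`. -/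
def HinfMinus : Set (ℝ → ℂ) :=
  {f | ∃ F : ℂ → ℂ, DifferentiableOn ℂ F LHP ∧ (∃ C : ℝ, ∀ z ∈ LHP, ‖F z‖ ≤ C) ∧
      ∀ᵐ x : ℝ, bdryLimLow F x (f x)}

/-- Invertible elements of `H_∞^+`. -/
def GHinfPlus (h : ℝ → ℂ) : Prop :=
  h ∈ HinfPlus ∧ ∃ k ∈ HinfPlus, ∀ᵐ x : ℝ, h x * k x = 1

/-- Invertible elements of `H_∞^-`. -/
def GHinfMinus (h : ℝ → ℂ) : Prop :=
  h ∈ HinfMinus ∧ ∃ k ∈ HinfMinus, ∀ᵐ x : ℝ, h x * k x = 1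

/-- Inner function on the upper half-plane: analytic and bounded by `1` on `ℂ⁺`, with
unimodular boundary values a.e. on `ℝ` (its values on `ℝ` serve as the boundary trace). -/
def InnerUHP (θ : ℂ → ℂ) : Prop :=
  DifferentiableOn ℂ θ UHP ∧ (∀ z ∈ UHP, ‖θ z‖ ≤ 1) ∧
  (∀ᵐ x : ℝ, ‖θ (x : ℂ)‖ = 1) ∧ (∀ᵐ x : ℝ, bdryLimUp θ x (θ (x : ℂ)))

/-- Inner function on the lower half-plane. -/
def InnerLHP (θ : ℂ → ℂ) : Prop :=
  DifferentiableOn ℂ θ LHP ∧ (∀ z ∈ LHP, ‖θ z‖ ≤ 1) ∧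
  (∀ᵐ x : ℝ, ‖θ (x : ℂ)‖ = 1) ∧ (∀ᵐ x : ℝ, bdryLimLow θ x (θ (x : ℂ)))

/-- Non-constancy (on the upper half-plane). -/
def Nonconst (θ : ℂ → ℂ) : Prop := ¬ ∃ c : ℂ, ∀ z ∈ UHP, θ z = c

/-- Non-constancy on the lower half-plane. -/
def NonconstLHP (θ : ℂ → ℂ) : Prop := ¬ ∃ c : ℂ, ∀ z ∈ LHP, θ z = c

/-- The (generalised) Toeplitz kernel of a symbol `g` in `H_p^+`:
`ker T_g = {f ∈ H_p^+ : g f ∈ H_p^-}`. -/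
def kerT (p : ℝ) (g : ℝ → ℂ) : Set (ℝ → ℂ) :=
  {f | f ∈ Hplus p ∧ (fun x => g x * f x) ∈ Hminus p}

/-- Boundary trace of a function on the closed upper half-plane. -/
def bd (θ : ℂ → ℂ) : ℝ → ℂ := fun x => θ (x : ℂ)

/-- The model space `K_θ^p = H_p^+ ∩ θ H_p^- = ker T_{θ̄}`. -/
def Kmodel (p : ℝ) (θ : ℂ → ℂ) : Set (ℝ → ℂ) :=
  kerT p (fun x => (starRingEnd ℂ) (θ (x : ℂ)))

/-- Pointwise multiplication of a set of boundary functions by a fixed function. -/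
def mulSet (h : ℝ → ℂ) (K : Set (ℝ → ℂ)) : Set (ℝ → ℂ) :=
  (fun f => fun x => h x * f x) '' K

/-- `g ∈ L_∞(ℝ)`. -/
def IsLinf (g : ℝ → ℂ) : Prop :=
  AEStronglyMeasurable g volume ∧ ∃ C : ℝ, ∀ᵐ x : ℝ, ‖g x‖ ≤ C

/-- `K = A ⊕ B`: `K` is the (a.e.) direct sum of `A` and `B`. -/
def DirectSumEq (K A B : Set (ℝ → ℂ)) : Prop :=
  K = A + B ∧ ∀ f ∈ A, f ∈ B → f =ᵐ[volume] (0 : ℝ → ℂ)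

/-- `θ₂ ⪯ θ₁` : `θ₂` divides `θ₁` in the sense that `θ₁ = θ₂ θ₃` with `θ₃` inner. -/
def Divides (θ₂ θ₁ : ℂ → ℂ) : Prop :=
  ∃ θ₃ : ℂ → ℂ, InnerUHP θ₃ ∧ ∀ z ∈ UHP, θ₁ z = θ₂ z * θ₃ z

/-- `θ₂ ≺ θ₁` : `θ₁ = θ₂ θ₃` with `θ₃` a non-constant inner function. -/
def DividesStrict (θ₂ θ₁ : ℂ → ℂ) : Prop :=
  ∃ θ₃ : ℂ → ℂ, InnerUHP θ₃ ∧ Nonconst θ₃ ∧ ∀ z ∈ UHP, θ₁ z = θ₂ z * θ₃ z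

/-- `K` is the minimal Toeplitz kernel of `φ`: it is a Toeplitz kernel (with `L_∞`
symbol) containing `φ` and contained in every Toeplitz kernel containing `φ`. -/
def IsMinKernel (p : ℝ) (φ : ℝ → ℂ) (K : Set (ℝ → ℂ)) : Prop :=
  (∃ g : ℝ → ℂ, IsLinf g ∧ K = kerT p g) ∧ φ ∈ K ∧
  ∀ g : ℝ → ℂ, IsLinf g → φ ∈ kerT p g → K ⊆ kerT p g

/-- Outer function in `H_p^+`: a nonzero element with no non-constant inner factor. -/
def IsOuterPlusLp (p : ℝ) (f : ℝ → ℂ) : Prop :=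
  f ∈ Hplus p ∧ ¬ f =ᵐ[volume] (0 : ℝ → ℂ) ∧
  ∀ θ : ℂ → ℂ, InnerUHP θ → (∃ g ∈ Hplus p, ∀ᵐ x : ℝ, f x = θ (x : ℂ) * g x) → ¬ Nonconst θ

/-- Outer function in `H_p^-`. -/
def IsOuterMinusLp (p : ℝ) (f : ℝ → ℂ) : Prop :=
  f ∈ Hminus p ∧ ¬ f =ᵐ[volume] (0 : ℝ → ℂ) ∧
  ∀ θ : ℂ → ℂ, InnerLHP θ → (∃ g ∈ Hminus p, ∀ᵐ x : ℝ, f x = θ (x : ℂ) * g x) → ¬ NonconstLHP θ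

/-- Outer function in `H_∞^+`. -/
def IsOuterPlusInf (f : ℝ → ℂ) : Prop :=
  f ∈ HinfPlus ∧ ¬ f =ᵐ[volume] (0 : ℝ → ℂ) ∧
  ∀ θ : ℂ → ℂ, InnerUHP θ → (∃ g ∈ HinfPlus, ∀ᵐ x : ℝ, f x = θ (x : ℂ) * g x) → ¬ Nonconst θ

/-- Outer function in `H_∞^-`. -/
def IsOuterMinusInf (f : ℝ → ℂ) : Prop :=
  f ∈ HinfMinus ∧ ¬ f =ᵐ[volume] (0 : ℝ → ℂ) ∧
  ∀ θ : ℂ → ℂ, InnerLHP θ → (∃ g ∈ HinfMinus, ∀ᵐ x : ℝ, f x = θ (x : ℂ) * g x) → ¬ NonconstLHP θ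

end


section AuxStmt5

open MeasureTheory Complex Filter Set

lemma isOpenUHP : IsOpen UHP := isOpen_lt continuous_const Complex.continuous_im

lemma conj_mem_UHP {z : ℂ} (hz : z ∈ LHP) : (starRingEnd ℂ) z ∈ UHP := by
  simp only [UHP, LHP, Set.mem_setOf_eq, Complex.conj_im] at *
  linarith

lemma hasDerivAt_conj_conj {F : ℂ → ℂ} {w d : ℂ} (h : HasDerivAt F d w) :
    HasDerivAt (fun z => (starRingEnd ℂ) (F ((starRingEnd ℂ) z))) ((starRingEnd ℂ) d)
      ((starRingEnd ℂ) w) := by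
  rw [hasDerivAt_iff_tendsto] at h ⊢
  have key : (fun z : ℂ => ‖z - (starRingEnd ℂ) w‖⁻¹ *
      ‖(starRingEnd ℂ) (F ((starRingEnd ℂ) z)) -
        (starRingEnd ℂ) (F ((starRingEnd ℂ) ((starRingEnd ℂ) w))) -
        (z - (starRingEnd ℂ) w) • (starRingEnd ℂ) d‖)
      = (fun w' : ℂ => ‖w' - w‖⁻¹ * ‖F w' - F w - (w' - w) • d‖) ∘
          (fun z => (starRingEnd ℂ) z) := by
    funext z
    simp only [Function.comp, Complex.conj_conj, smul_eq_mul]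
    rw [show (starRingEnd ℂ) (F ((starRingEnd ℂ) z)) - (starRingEnd ℂ) (F w) -
        (z - (starRingEnd ℂ) w) * (starRingEnd ℂ) d
      = (starRingEnd ℂ) (F ((starRingEnd ℂ) z) - F w - ((starRingEnd ℂ) z - w) * d) by
        simp [map_sub, map_mul]]
    rw [show z - (starRingEnd ℂ) w = (starRingEnd ℂ) ((starRingEnd ℂ) z - w) by simp [map_sub]]
    rw [RCLike.norm_conj, RCLike.norm_conj]
  rw [key]
  have hc : Filter.Tendsto (fun z : ℂ => (starRingEnd ℂ) z) (nhds ((starRingEnd ℂ) w))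
      (nhds w) := by
    simpa using (Complex.continuous_conj.tendsto ((starRingEnd ℂ) w))
  exact h.comp hc

lemma diffOn_conj_conj {F : ℂ → ℂ} (hF : DifferentiableOn ℂ F UHP) :
    DifferentiableOn ℂ (fun z => (starRingEnd ℂ) (F ((starRingEnd ℂ) z))) LHP := by
  intro z hz
  have hw : (starRingEnd ℂ) z ∈ UHP := conj_mem_UHP hz
  have hd : DifferentiableAt ℂ F ((starRingEnd ℂ) z) :=
    hF.differentiableAt (isOpenUHP.mem_nhds hw)
  have h2 := hasDerivAt_conj_conj hd.hasDerivAt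
  rw [Complex.conj_conj] at h2
  exact h2.differentiableAt.differentiableWithinAt

lemma integrableB {δ M p : ℝ} (hδ : 0 < δ) (hp : 1 < p) (a : ℝ) :
    Integrable (fun x : ℝ => (if |x - a| < δ then M else 2 / |x - a|) ^ p) := by
  have h0 : Integrable (fun x : ℝ => (if |x| < δ then M else 2 / |x|) ^ p) := by
    have h1 : IntegrableOn (fun x : ℝ => (if |x| < δ then M else 2 / |x|) ^ p) (Ioo (-δ) δ) := by
      have hc : IntegrableOn (fun _ : ℝ => M ^ p) (Ioo (-δ) δ) :=
        integrableOn_const measure_Ioo_lt_top.ne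
      refine hc.congr_fun ?_ measurableSet_Ioo
      intro x hx
      simp only [if_pos (abs_lt.2 ⟨hx.1, hx.2⟩)]
    have h2 : IntegrableOn (fun x : ℝ => (if |x| < δ then M else 2 / |x|) ^ p) (Ici δ) := by
      have hint : IntegrableOn (fun x : ℝ => 2 ^ p * x ^ (-p)) (Ioi δ) :=
        (integrableOn_Ioi_rpow_of_lt (by linarith) hδ).const_mul _
      have hint' : IntegrableOn (fun x : ℝ => 2 ^ p * x ^ (-p)) (Ici δ) :=
        (integrableOn_Ici_iff_integrableOn_Ioi (f := fun x : ℝ => 2 ^ p * x ^ (-p))).2 hint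
      refine hint'.congr_fun (fun x hx => ?_) measurableSet_Ici
      have hx0 : (0:ℝ) < x := lt_of_lt_of_le hδ hx
      show 2 ^ p * x ^ (-p) = (if |x| < δ then M else 2 / |x|) ^ p
      rw [if_neg (by rw [abs_of_pos hx0]; exact not_lt.2 hx), abs_of_pos hx0,
        Real.div_rpow (by norm_num) hx0.le, Real.rpow_neg hx0.le, div_eq_mul_inv]
    have h3 : IntegrableOn (fun x : ℝ => (if |x| < δ then M else 2 / |x|) ^ p) (Iic (-δ)) := by
      set f : ℝ → ℝ := fun x => (if |x| < δ then M else 2 / |x|) ^ p with hf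
      have heven : ∀ x, f (-x) = f x := fun x => by simp only [f, abs_neg]
      have h2' : Integrable ((Ici δ).indicator f) :=
        (integrable_indicator_iff measurableSet_Ici).2 h2
      have h3' := h2'.comp_neg
      have heq : (fun t => (Ici δ).indicator f (-t)) = (Iic (-δ)).indicator f := by
        funext x
        by_cases hx : δ ≤ -x
        · rw [Set.indicator_of_mem (mem_Ici.2 hx) f,
            Set.indicator_of_mem (mem_Iic.2 (le_neg.1 hx)) f, heven]
        · rw [Set.indicator_of_notMem (fun h => hx (mem_Ici.1 h)) f,
            Set.indicator_of_notMem (fun h => hx (le_neg.2 (mem_Iic.1 h))) f]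
      rw [heq] at h3'
      exact (integrable_indicator_iff measurableSet_Iic).1 h3'
    rw [← integrableOn_univ]
    refine ((h3.union (h1.union h2)).mono_set ?_)
    intro x _
    rcases le_or_gt x (-δ) with h | h
    · exact Or.inl h
    rcases lt_or_ge x δ with h' | h'
    · exact Or.inr (Or.inl ⟨h, h'⟩)
    · exact Or.inr (Or.inr h')
  exact h0.comp_sub_right a

lemma aesm_bd {θ : ℂ → ℂ} (hd : DifferentiableOn ℂ θ UHP)
    (hb : ∀ᵐ x : ℝ, bdryLimUp θ x (θ (x:ℂ))) :
    AEStronglyMeasurable (fun x : ℝ => θ (x:ℂ)) volume := by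
  have hcont : ContinuousOn θ UHP := hd.continuousOn
  have hfm : ∀ n : ℕ, AEStronglyMeasurable
      (fun x : ℝ => θ ((x:ℂ) + ((1/(n+1) : ℝ) : ℂ) * Complex.I)) volume := by
    intro n
    apply Continuous.aestronglyMeasurable
    apply hcont.comp_continuous
    · exact (Complex.continuous_ofReal).add continuous_const
    · intro x
      simp only [UHP, Set.mem_setOf_eq, Complex.add_im, Complex.ofReal_im, Complex.mul_im,
        Complex.I_im, Complex.I_re, Complex.ofReal_re, mul_one, mul_zero, zero_add, add_zero]
      positivity
  apply aestronglyMeasurable_of_tendsto_ae atTop hfm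
  filter_upwards [hb] with x hx
  have hseq : Tendsto (fun n : ℕ => (1/((n:ℝ)+1) : ℝ)) atTop (nhdsWithin 0 (Ioi 0)) := by
    apply tendsto_nhdsWithin_of_tendsto_nhds_of_eventually_within
    · exact tendsto_one_div_add_atTop_nhds_zero_nat
    · exact Eventually.of_forall fun n => mem_Ioi.2 (by positivity)
  exact hx.comp hseq

lemma slope_bound {θ : ℂ → ℂ} {a : ℝ} (han : AnalyticAt ℂ θ (a:ℂ)) (ha1 : θ (a:ℂ) = 1) :
    ∃ δ > 0, ∃ M ≥ 0, ∀ z : ℂ, z ≠ (a:ℂ) → ‖z - (a:ℂ)‖ < δ → ‖θ z - 1‖ ≤ M * ‖z - (a:ℂ)‖ := by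
  have hd : DifferentiableAt ℂ θ (a:ℂ) := han.differentiableAt
  have hc : ContinuousAt (dslope θ (a:ℂ)) (a:ℂ) := continuousAt_dslope_same.2 hd
  obtain ⟨δ, hδ, h⟩ := Metric.continuousAt_iff.1 hc 1 one_pos
  refine ⟨δ, hδ, ‖dslope θ (a:ℂ) (a:ℂ)‖ + 1, by positivity, fun z hz hzd => ?_⟩
  have h1 : dist (dslope θ (a:ℂ) z) (dslope θ (a:ℂ) (a:ℂ)) < 1 :=
    h (show dist z (a:ℂ) < δ by rwa [dist_eq_norm])
  rw [dist_eq_norm] at h1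
  have h2 : ‖dslope θ (a:ℂ) z‖ ≤ ‖dslope θ (a:ℂ) (a:ℂ)‖ + 1 := by
    have := norm_add_le (dslope θ (a:ℂ) z - dslope θ (a:ℂ) (a:ℂ)) (dslope θ (a:ℂ) (a:ℂ))
    simp only [sub_add_cancel] at this
    linarith
  have hzs : z - (a:ℂ) ≠ 0 := sub_ne_zero.2 hz
  have heq : θ z - 1 = (z - (a:ℂ)) * dslope θ (a:ℂ) z := by
    rw [dslope_of_ne _ hz, slope_def_field, ha1]
    field_simp
  rw [heq, norm_mul, mul_comm]
  exact mul_le_mul_of_nonneg_right h2 (norm_nonneg _)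

lemma key_bound {θ : ℂ → ℂ} {a δ M : ℝ} (hδ : 0 < δ)
    (hsl : ∀ z : ℂ, z ≠ (a:ℂ) → ‖z - (a:ℂ)‖ < δ → ‖θ z - 1‖ ≤ M * ‖z - (a:ℂ)‖)
    {z : ℂ} (hz : z ≠ (a:ℂ)) (hb : ‖θ z - 1‖ ≤ 2) :
    ‖(θ z - 1)/(z - (a:ℂ))‖ ≤ (if |z.re - a| < δ then max M (2/δ) else 2 / |z.re - a|) := by
  have hzs : z - (a:ℂ) ≠ 0 := sub_ne_zero.2 hz
  have hzn : 0 < ‖z - (a:ℂ)‖ := norm_pos_iff.2 hzs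
  have hre : |z.re - a| ≤ ‖z - (a:ℂ)‖ := by
    have h := Complex.abs_re_le_norm (z - (a:ℂ))
    simpa [Complex.sub_re, Complex.ofReal_re] using h
  rw [norm_div]
  by_cases h1 : ‖z - (a:ℂ)‖ < δ
  · have hb' := hsl z hz h1
    have hM : ‖θ z - 1‖ / ‖z - (a:ℂ)‖ ≤ M := by rw [div_le_iff₀ hzn]; exact hb'
    rw [if_pos (lt_of_le_of_lt hre h1)]
    exact hM.trans (le_max_left _ _)
  · push_neg at h1
    have h2 : ‖θ z - 1‖ / ‖z - (a:ℂ)‖ ≤ 2 / ‖z - (a:ℂ)‖ := by gcongr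
    by_cases h3 : |z.re - a| < δ
    · rw [if_pos h3]
      refine h2.trans (le_trans ?_ (le_max_right _ _))
      gcongr
    · rw [if_neg h3]
      push_neg at h3
      refine h2.trans ?_
      gcongr
      · linarith

end AuxStmt5

/-- if `θ₁` is a non-constant inner function, analytic near `a ∈ ℝ`
with `θ₁(a) = 1`, then `Λ(ξ) = (θ₁(ξ) − 1)/(ξ − a)` belongs to `K_{θ₁}^p` for all
`p ∈ (1,∞)`. -/
theorem stmt5 (θ₁ : ℂ → ℂ) (hθ : InnerUHP θ₁) (hnc : Nonconst θ₁) (a : ℝ)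
    (han : ∃ U ∈ nhds (a : ℂ), ∀ z ∈ U, AnalyticAt ℂ θ₁ z) (ha1 : θ₁ (a : ℂ) = 1)
    (p : ℝ) (hp : 1 < p) :
    (fun x : ℝ => (θ₁ (x : ℂ) - 1) / ((x : ℂ) - (a : ℂ))) ∈ Kmodel p θ₁ := by
  obtain ⟨hθd, hθb, hθu, hθl⟩ := hθ
  obtain ⟨U, hU, hUan⟩ := han
  obtain ⟨δ, hδ, M, hM, hsl⟩ := slope_bound (hUan _ (mem_of_mem_nhds hU)) ha1
  have hp0 : (0:ℝ) < p := by linarith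
  set M' : ℝ := max M (2/δ) with hM'def
  have hM'0 : (0:ℝ) ≤ M' := le_trans hM (le_max_left _ _)
  set B : ℝ → ℝ := fun x => if |x - a| < δ then M' else 2 / |x - a| with hBdef
  have hBp : Integrable (fun x => B x ^ p) volume := integrableB hδ hp a
  have hne : ∀ᵐ x : ℝ, x ≠ a := by
    have hs : {x : ℝ | ¬ x ≠ a} = {a} := by ext x; simp
    rw [MeasureTheory.ae_iff, hs]
    exact Real.volume_singleton
  have hbd : AEStronglyMeasurable (fun x : ℝ => θ₁ (x:ℂ)) volume := aesm_bd hθd hθl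
  set Λ : ℝ → ℂ := fun x : ℝ => (θ₁ (x : ℂ) - 1) / ((x : ℂ) - (a : ℂ)) with hΛdef
  have hΛm : AEStronglyMeasurable Λ volume := by
    have h1 : AEMeasurable (fun x : ℝ => θ₁ (x:ℂ)) volume := hbd.aemeasurable
    have h2 : AEMeasurable (fun x : ℝ => ((x:ℂ) - (a:ℂ))) volume :=
      ((Complex.continuous_ofReal.sub continuous_const).measurable).aemeasurable
    exact ((h1.sub aemeasurable_const).div h2).aestronglyMeasurable
  have hΛb : ∀ᵐ x : ℝ, ‖Λ x‖ ≤ B x := by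
    filter_upwards [hne, hθu] with x hx hux
    have h2 : ‖θ₁ (x:ℂ) - 1‖ ≤ 2 := by
      calc ‖θ₁ (x:ℂ) - 1‖ ≤ ‖θ₁ (x:ℂ)‖ + ‖(1:ℂ)‖ := norm_sub_le _ _
      _ ≤ 2 := by rw [hux]; norm_num
    have hz : (x:ℂ) ≠ (a:ℂ) := fun h => hx (Complex.ofReal_inj.1 h)
    have hk := key_bound hδ hsl hz h2
    simpa only [hΛdef, hBdef, Complex.ofReal_re] using hk
  have memLp : ∀ f : ℝ → ℂ, AEStronglyMeasurable f volume → (∀ᵐ x : ℝ, ‖f x‖ ≤ B x) →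
      MemLp f (ENNReal.ofReal p) volume := by
    intro f hm hb
    have hq0 : ENNReal.ofReal p ≠ 0 := by
      simp only [ne_eq, ENNReal.ofReal_eq_zero, not_le]; linarith
    have hqt : ENNReal.ofReal p ≠ ⊤ := ENNReal.ofReal_ne_top
    have hInt : Integrable (fun x => ‖f x‖ ^ p) volume := by
      refine hBp.mono' ?_ ?_
      · exact (Real.continuous_rpow_const hp0.le).comp_aestronglyMeasurable hm.norm
      · filter_upwards [hb] with x hx
        rw [Real.norm_eq_abs, _root_.abs_of_nonneg (Real.rpow_nonneg (norm_nonneg _) _)]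
        exact Real.rpow_le_rpow (norm_nonneg _) hx hp0.le
    have hiff := memLp_norm_rpow_iff (q := ENNReal.ofReal p) (p := ENNReal.ofReal p) hm hq0 hqt
    rw [ENNReal.toReal_ofReal hp0.le, ENNReal.div_self hq0 hqt] at hiff
    exact hiff.1 (memLp_one_iff_integrable.2 hInt)
  have hzUHP : ∀ z ∈ UHP, z ≠ (a:ℂ) := by
    intro z hz h
    rw [h] at hz
    simp [UHP] at hz
  have hmemne : ∀ (x y : ℝ), y ≠ 0 → ((x:ℂ) + (y:ℂ)*Complex.I) ≠ (a:ℂ) := by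
    intro x y hy h
    apply hy
    have him : ((x:ℂ) + (y:ℂ)*Complex.I).im = ((a:ℂ) : ℂ).im := by rw [h]
    simpa using him
  have hinU : ∀ (x y : ℝ), 0 < y → ((x:ℂ) + (y:ℂ)*Complex.I) ∈ UHP := by
    intro x y hy
    simp only [UHP, Set.mem_setOf_eq, Complex.add_im, Complex.ofReal_im, Complex.mul_im,
      Complex.I_im, Complex.I_re, Complex.ofReal_re, mul_one, mul_zero, zero_add, add_zero]
    exact hy
  have hFb : ∀ (x y : ℝ), 0 < y →
      ‖(θ₁ ((x:ℂ) + (y:ℂ)*Complex.I) - 1) / (((x:ℂ) + (y:ℂ)*Complex.I) - (a:ℂ))‖ ≤ B x := by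
    intro x y hy
    have h2 : ‖θ₁ ((x:ℂ) + (y:ℂ)*Complex.I) - 1‖ ≤ 2 := by
      have := hθb _ (hinU x y hy)
      calc ‖θ₁ ((x:ℂ) + (y:ℂ)*Complex.I) - 1‖
          ≤ ‖θ₁ ((x:ℂ) + (y:ℂ)*Complex.I)‖ + ‖(1:ℂ)‖ := norm_sub_le _ _
        _ ≤ 2 := by rw [norm_one]; linarith
    have hk := key_bound hδ hsl (hmemne x y hy.ne') h2
    simpa only [hBdef, Complex.add_re, Complex.ofReal_re, Complex.mul_re, Complex.I_re,
      Complex.I_im, Complex.ofReal_im, mul_zero, mul_one, zero_sub, zero_mul, sub_zero,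
      add_zero, neg_zero, zero_add] using hk
  set C : ℝ := ∫ x : ℝ, B x ^ p with hCdef
  have hlineInt : ∀ g : ℝ → ℝ, (∀ x, 0 ≤ g x) → (∀ x, g x ≤ B x) →
      (∫ x : ℝ, g x ^ p) ≤ C := by
    intro g hg0 hgB
    refine integral_mono_of_nonneg (Eventually.of_forall fun x => ?_) hBp
      (Eventually.of_forall fun x => ?_)
    · exact Real.rpow_nonneg (hg0 x) p
    · exact Real.rpow_le_rpow (hg0 x) (hgB x) hp0.le
  have hFd : DifferentiableOn ℂ (fun z => (θ₁ z - 1) / (z - (a:ℂ))) UHP := by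
    apply DifferentiableOn.div
    · exact hθd.sub (differentiableOn_const 1)
    · exact (differentiable_id.sub_const _).differentiableOn
    · intro z hz
      exact sub_ne_zero.2 (hzUHP z hz)
  have hconjpt : ∀ (x y : ℝ), (starRingEnd ℂ) ((x:ℂ) + (y:ℂ)*Complex.I)
      = (x:ℂ) + ((-y : ℝ):ℂ)*Complex.I := by
    intro x y
    simp only [map_add, map_mul, Complex.conj_ofReal, Complex.conj_I]
    push_cast
    ring
  constructor
  · -- Hplus part
    refine ⟨memLp Λ hΛm hΛb, fun z => (θ₁ z - 1) / (z - (a:ℂ)), hFd, ⟨C, ?_⟩, ?_⟩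
    · intro y hy
      exact hlineInt (fun x => ‖(θ₁ ((x:ℂ) + (y:ℂ)*Complex.I) - 1) /
        (((x:ℂ) + (y:ℂ)*Complex.I) - (a:ℂ))‖) (fun x => norm_nonneg _) (fun x => hFb x y hy)
    · filter_upwards [hne, hθl] with x hx hl
      have hxa : (x:ℂ) - (a:ℂ) ≠ 0 := sub_ne_zero.2 (fun h => hx (Complex.ofReal_inj.1 h))
      have hden : Tendsto (fun y : ℝ => ((x:ℂ) + (y:ℂ)*Complex.I - (a:ℂ)))
          (nhdsWithin 0 (Ioi 0)) (nhds ((x:ℂ) - (a:ℂ))) := by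
        have hcont : Continuous fun y : ℝ => ((x:ℂ) + (y:ℂ)*Complex.I - (a:ℂ)) :=
          (continuous_const.add (Complex.continuous_ofReal.mul continuous_const)).sub
            continuous_const
        have h0 := (hcont.tendsto 0).mono_left (nhdsWithin_le_nhds (s := Ioi 0))
        simpa using h0
      exact (hl.sub tendsto_const_nhds).div hden hxa
  · -- Hminus part
    have hF2d : DifferentiableOn ℂ (fun w => (1 - θ₁ w) / (w - (a:ℂ))) UHP := by
      apply DifferentiableOn.div
      · exact (differentiableOn_const 1).sub hθd
      · exact (differentiable_id.sub_const _).differentiableOn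
      · intro z hz
        exact sub_ne_zero.2 (hzUHP z hz)
    have hGd : DifferentiableOn ℂ
        (fun z => (starRingEnd ℂ) ((1 - θ₁ ((starRingEnd ℂ) z)) / ((starRingEnd ℂ) z - (a:ℂ))))
        LHP := diffOn_conj_conj hF2d
    have hgB : ∀ᵐ x : ℝ, ‖(starRingEnd ℂ) (θ₁ (x:ℂ)) * Λ x‖ ≤ B x := by
      filter_upwards [hΛb, hθu] with x h1 h2
      rw [norm_mul, RCLike.norm_conj, h2, one_mul]
      exact h1
    have hgm : AEStronglyMeasurable (fun x : ℝ => (starRingEnd ℂ) (θ₁ (x:ℂ)) * Λ x) volume :=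
      (Complex.continuous_conj.comp_aestronglyMeasurable hbd).mul hΛm
    refine ⟨memLp _ hgm hgB,
      fun z => (starRingEnd ℂ) ((1 - θ₁ ((starRingEnd ℂ) z)) / ((starRingEnd ℂ) z - (a:ℂ))),
      hGd, ⟨C, ?_⟩, ?_⟩
    · intro y hy
      apply hlineInt (fun x => ‖(starRingEnd ℂ) ((1 - θ₁ ((starRingEnd ℂ) ((x:ℂ) + (y:ℂ)*Complex.I))) /
        ((starRingEnd ℂ) ((x:ℂ) + (y:ℂ)*Complex.I) - (a:ℂ)))‖) (fun x => norm_nonneg _)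
      intro x
      rw [RCLike.norm_conj, hconjpt x y]
      have hnorm : ‖(1 - θ₁ ((x:ℂ) + ((-y : ℝ):ℂ)*Complex.I)) /
          (((x:ℂ) + ((-y : ℝ):ℂ)*Complex.I) - (a:ℂ))‖
        = ‖(θ₁ ((x:ℂ) + ((-y : ℝ):ℂ)*Complex.I) - 1) /
          (((x:ℂ) + ((-y : ℝ):ℂ)*Complex.I) - (a:ℂ))‖ := by
        rw [norm_div, norm_div, norm_sub_rev]
      rw [hnorm]
      exact hFb x (-y) (by linarith)
    · filter_upwards [hne, hθl, hθu] with x hx hl hu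
      have hxa : (x:ℂ) - (a:ℂ) ≠ 0 := sub_ne_zero.2 (fun h => hx (Complex.ofReal_inj.1 h))
      have hneg : Tendsto (fun y : ℝ => -y) (nhdsWithin 0 (Iio 0)) (nhdsWithin 0 (Ioi 0)) := by
        apply tendsto_nhdsWithin_of_tendsto_nhds_of_eventually_within
        · have h0 := (continuous_neg.tendsto (0:ℝ)).mono_left (nhdsWithin_le_nhds (s := Iio 0))
          simpa using h0
        · filter_upwards [self_mem_nhdsWithin] with y hy
          exact mem_Ioi.2 (neg_pos.2 hy)
      have hden : Tendsto (fun y : ℝ => ((x:ℂ) + (y:ℂ)*Complex.I - (a:ℂ)))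
          (nhdsWithin 0 (Ioi 0)) (nhds ((x:ℂ) - (a:ℂ))) := by
        have hcont : Continuous fun y : ℝ => ((x:ℂ) + (y:ℂ)*Complex.I - (a:ℂ)) :=
          (continuous_const.add (Complex.continuous_ofReal.mul continuous_const)).sub
            continuous_const
        have h0 := (hcont.tendsto 0).mono_left (nhdsWithin_le_nhds (s := Ioi 0))
        simpa using h0
      have h2 : Tendsto (fun y' : ℝ => (1 - θ₁ ((x:ℂ) + (y':ℂ)*Complex.I)) /
          (((x:ℂ) + (y':ℂ)*Complex.I) - (a:ℂ))) (nhdsWithin 0 (Ioi 0))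
          (nhds ((1 - θ₁ (x:ℂ)) / ((x:ℂ) - (a:ℂ)))) :=
        (tendsto_const_nhds.sub hl).div hden hxa
      have h3 : Tendsto (fun y : ℝ => (1 - θ₁ ((x:ℂ) + ((-y : ℝ):ℂ)*Complex.I)) /
          (((x:ℂ) + ((-y : ℝ):ℂ)*Complex.I) - (a:ℂ))) (nhdsWithin 0 (Iio 0))
          (nhds ((1 - θ₁ (x:ℂ)) / ((x:ℂ) - (a:ℂ)))) := h2.comp hneg
      have h4 : Tendsto (fun y : ℝ => (starRingEnd ℂ) ((1 - θ₁ ((x:ℂ) + ((-y : ℝ):ℂ)*Complex.I)) /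
          (((x:ℂ) + ((-y : ℝ):ℂ)*Complex.I) - (a:ℂ)))) (nhdsWithin 0 (Iio 0))
          (nhds ((starRingEnd ℂ) ((1 - θ₁ (x:ℂ)) / ((x:ℂ) - (a:ℂ))))) :=
        (Complex.continuous_conj.tendsto _).comp h3
      have heqfun : (fun y : ℝ => (starRingEnd ℂ) ((1 - θ₁ ((x:ℂ) + ((-y : ℝ):ℂ)*Complex.I)) /
          (((x:ℂ) + ((-y : ℝ):ℂ)*Complex.I) - (a:ℂ))))
        = fun y : ℝ => (starRingEnd ℂ) ((1 - θ₁ ((starRingEnd ℂ) ((x:ℂ) + (y:ℂ)*Complex.I))) /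
          ((starRingEnd ℂ) ((x:ℂ) + (y:ℂ)*Complex.I) - (a:ℂ))) := by
        funext y
        rw [hconjpt x y]
      have hval : (starRingEnd ℂ) ((1 - θ₁ (x:ℂ)) / ((x:ℂ) - (a:ℂ)))
          = (starRingEnd ℂ) (θ₁ (x:ℂ)) * Λ x := by
        have hc : (starRingEnd ℂ) ((x:ℂ) - (a:ℂ)) = (x:ℂ) - (a:ℂ) := by
          rw [map_sub, Complex.conj_ofReal, Complex.conj_ofReal]
        rw [map_div₀, map_sub, map_one, hc]
        have habs : ‖θ₁ (x:ℂ)‖ = 1 := hu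
        have ht : (starRingEnd ℂ) (θ₁ (x:ℂ)) * θ₁ (x:ℂ) = 1 := by
          rw [mul_comm, Complex.mul_conj, Complex.normSq_eq_norm_sq, habs]
          norm_num
        simp only [hΛdef]
        rw [← mul_div_assoc, mul_sub, ht, mul_one]
      rw [heqfun, hval] at h4
      exact h4
end

section
/- Let θ₁, θ₂ be inner functions with K_{θ₁} = h₊K_{θ₂} for some h₊ invertible in H_∞^+. Then φ₊ is a maximal function for K_{θ₁} (i.e., K_min(φ₊) = K_{θ₁}) if and only if φ₊ = h₊ψ₊ where ψ₊ is a maximal function for K_{θ₂}. -/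
open MeasureTheory Complex Filter Set
open scoped Pointwise ENNReal

section Aux

open MeasureTheory Complex Filter Set

/-- The sequence `1/(n+1)` tends to `0` from within `Ioi 0`. -/
lemma seq_tendsto_nhdsWithin :
    Tendsto (fun n : ℕ => (1 / (n + 1) : ℝ)) atTop (nhdsWithin 0 (Set.Ioi 0)) := by
  rw [tendsto_nhdsWithin_iff]
  refine ⟨tendsto_one_div_add_atTop_nhds_zero_nat, Filter.Eventually.of_forall fun n => ?_⟩
  simp only [Set.mem_Ioi]
  positivity

/-- A function with a.e. boundary values of a function analytic on `UHP` is
a.e. strongly measurable. -/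
lemma aesm_of_bdryLimUp {F : ℂ → ℂ} {f : ℝ → ℂ} (hF : DifferentiableOn ℂ F UHP)
    (hlim : ∀ᵐ x : ℝ, bdryLimUp F x (f x)) : AEStronglyMeasurable f volume := by
  have hc : ContinuousOn F UHP := hF.continuousOn
  have hfn : ∀ n : ℕ, Continuous (fun x : ℝ => F ((x : ℂ) + ((1 / (n + 1) : ℝ) : ℂ) * Complex.I)) := by
    intro n
    apply hc.comp_continuous
    · continuity
    · intro x
      simp only [UHP, Set.mem_setOf_eq, Complex.add_im, Complex.ofReal_im,
        Complex.mul_im, Complex.ofReal_re, Complex.I_im, Complex.I_re]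
      norm_num
      positivity
  apply aestronglyMeasurable_of_tendsto_ae atTop (fun n => (hfn n).aestronglyMeasurable)
  filter_upwards [hlim] with x hx
  exact hx.comp seq_tendsto_nhdsWithin

/-- If the analytic extension is bounded by `C` on `UHP`, the boundary values are
bounded by `C` a.e. -/
lemma bound_of_bdryLimUp {F : ℂ → ℂ} {f : ℝ → ℂ} {C : ℝ} (hb : ∀ z ∈ UHP, ‖F z‖ ≤ C)
    (hlim : ∀ᵐ x : ℝ, bdryLimUp F x (f x)) : ∀ᵐ x : ℝ, ‖f x‖ ≤ C := by
  filter_upwards [hlim] with x hx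
  have h1 : Tendsto (fun n : ℕ => ‖F ((x : ℂ) + ((1 / (n + 1) : ℝ) : ℂ) * Complex.I)‖)
      atTop (nhds ‖f x‖) := (hx.comp seq_tendsto_nhdsWithin).norm
  refine le_of_tendsto h1 (Filter.Eventually.of_forall fun n => hb _ ?_)
  simp only [UHP, Set.mem_setOf_eq, Complex.add_im, Complex.ofReal_im,
    Complex.mul_im, Complex.ofReal_re, Complex.I_im, Complex.I_re]
  norm_num
  positivity

lemma isLinf_of_HinfPlus {h : ℝ → ℂ} (hh : h ∈ HinfPlus) : IsLinf h := by
  obtain ⟨F, hF, ⟨C, hC⟩, hlim⟩ := hh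
  exact ⟨aesm_of_bdryLimUp hF hlim, C, bound_of_bdryLimUp hC hlim⟩

lemma isLinf_conj_inner {θ : ℂ → ℂ} (hθ : InnerUHP θ) :
    IsLinf (fun x : ℝ => (starRingEnd ℂ) (θ (x : ℂ))) := by
  obtain ⟨hd, hb, hn, hlim⟩ := hθ
  refine ⟨Complex.continuous_conj.comp_aestronglyMeasurable
    (aesm_of_bdryLimUp hd hlim), 1, ?_⟩
  filter_upwards [hn] with x hx
  simp [hx]

lemma isLinf_mul {g k : ℝ → ℂ} (hg : IsLinf g) (hk : IsLinf k) :
    IsLinf (fun x => g x * k x) := by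
  obtain ⟨hgm, Cg, hCg⟩ := hg
  obtain ⟨hkm, Ck, hCk⟩ := hk
  have hCg0 : 0 ≤ Cg := by
    obtain ⟨x, hx⟩ := hCg.exists
    exact le_trans (norm_nonneg _) hx
  refine ⟨hgm.mul hkm, Cg * Ck, ?_⟩
  filter_upwards [hCg, hCk] with x h1 h2
  calc ‖g x * k x‖ = ‖g x‖ * ‖k x‖ := norm_mul _ _
    _ ≤ Cg * Ck := mul_le_mul h1 h2 (norm_nonneg _) hCg0

lemma Hplus_ae {p : ℝ} {f f' : ℝ → ℂ} (hf : f ∈ Hplus p) (he : f =ᵐ[volume] f') :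
    f' ∈ Hplus p := by
  obtain ⟨hm, F, hF, hC, hlim⟩ := hf
  refine ⟨hm.ae_eq he, F, hF, hC, ?_⟩
  filter_upwards [hlim, he] with x hx hex
  rwa [← hex]

lemma Hminus_ae {p : ℝ} {f f' : ℝ → ℂ} (hf : f ∈ Hminus p) (he : f =ᵐ[volume] f') :
    f' ∈ Hminus p := by
  obtain ⟨hm, F, hF, hC, hlim⟩ := hf
  refine ⟨hm.ae_eq he, F, hF, hC, ?_⟩
  filter_upwards [hlim, he] with x hx hex
  rwa [← hex]

lemma kerT_ae {p : ℝ} {g f f' : ℝ → ℂ} (hf : f ∈ kerT p g) (he : f =ᵐ[volume] f') :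
    f' ∈ kerT p g :=
  ⟨Hplus_ae hf.1 he, Hminus_ae hf.2 (by filter_upwards [he] with x hx; rw [hx])⟩

end Aux

/-- if `K_{θ₁} = h₊ K_{θ₂}` with `h₊ ∈ GH_∞^+`, then `φ₊` is maximal
for `K_{θ₁}` iff `φ₊ = h₊ψ₊` with `ψ₊` maximal for `K_{θ₂}`. -/
theorem stmt15 (p : ℝ) (hp : 1 < p) (θ₁ θ₂ : ℂ → ℂ) (h1 : InnerUHP θ₁) (h2 : InnerUHP θ₂)
    (h : ℝ → ℂ) (hh : GHinfPlus h) (heq : Kmodel p θ₁ = mulSet h (Kmodel p θ₂))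
    (φ : ℝ → ℂ) :
    IsMinKernel p φ (Kmodel p θ₁) ↔
      ∃ ψ : ℝ → ℂ, IsMinKernel p ψ (Kmodel p θ₂) ∧ ∀ᵐ x : ℝ, φ x = h x * ψ x := by
  obtain ⟨hhH, k, hkH, hhk⟩ := hh
  constructor
  · rintro ⟨-, hφK, hφmax⟩
    have hφK' := hφK
    rw [heq] at hφK'
    obtain ⟨ψ, hψK, hφeq⟩ := hφK'
    refine ⟨ψ, ⟨⟨_, isLinf_conj_inner h2, rfl⟩, hψK, ?_⟩, ?_⟩
    · -- minimality of ψ for K_{θ₂}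
      intro g hg hψg
      have hg' : IsLinf (fun x => g x * k x) := isLinf_mul hg (isLinf_of_HinfPlus hkH)
      have hφg' : φ ∈ kerT p (fun x => g x * k x) := by
        refine ⟨hφK.1, Hminus_ae hψg.2 ?_⟩
        filter_upwards [hhk] with x hx
        have hφx : h x * ψ x = φ x := congrFun hφeq x
        calc g x * ψ x = g x * k x * (h x * ψ x) - g x * ψ x * (h x * k x - 1) := by ring
          _ = g x * k x * φ x := by rw [hx, hφx]; ring
      have hsub := hφmax _ hg' hφg'
      intro f₂ hf₂
      have hf₁ : (fun x => h x * f₂ x) ∈ Kmodel p θ₁ := by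
        rw [heq]; exact ⟨f₂, hf₂, rfl⟩
      have hfk := hsub hf₁
      refine ⟨hf₂.1, Hminus_ae hfk.2 ?_⟩
      filter_upwards [hhk] with x hx
      calc g x * k x * (h x * f₂ x) = g x * f₂ x * (h x * k x) := by ring
        _ = g x * f₂ x := by rw [hx, mul_one]
    · exact Filter.Eventually.of_forall fun x => (congrFun hφeq x).symm
  · rintro ⟨ψ, ⟨-, hψK, hψmax⟩, hφψ⟩
    have hψ₁ : (fun x => h x * ψ x) ∈ Kmodel p θ₁ := by
      rw [heq]; exact ⟨ψ, hψK, rfl⟩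
    have hφK : φ ∈ Kmodel p θ₁ :=
      kerT_ae hψ₁ (by filter_upwards [hφψ] with x hx; rw [hx])
    refine ⟨⟨_, isLinf_conj_inner h1, rfl⟩, hφK, ?_⟩
    intro g hg hφg
    have hgh : IsLinf (fun x => g x * h x) := isLinf_mul hg (isLinf_of_HinfPlus hhH)
    have hψg : ψ ∈ kerT p (fun x => g x * h x) := by
      refine ⟨hψK.1, Hminus_ae hφg.2 ?_⟩
      filter_upwards [hφψ] with x hx
      rw [hx]; ring
    have hsub := hψmax _ hgh hψg
    intro f hf
    have hf' := hf
    rw [heq] at hf'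
    obtain ⟨f₂, hf₂, rfl⟩ := hf'
    have hfk := hsub hf₂
    refine ⟨hf.1, Hminus_ae hfk.2 ?_⟩
    exact Filter.Eventually.of_forall fun x => (mul_assoc _ _ _)
end
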